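/- Let K be a compact subset of { (Q,η) ∈ Sym₀(3)×ℝ : v_min(Q) > −1/3 and |Q|² > η }. Then limsup_{t→0⁺} sup_{(Q,η)∈K} H²({ p ∈ S² : |Qp·p − η| < t }) = 0; that is, for every ε > 0 there is t₀ > 0 such that for all 0 < t < t₀ and all (Q,η) ∈ K, the surface measure of { p ∈ S² : |Qp·p − η| < t } is less than ε. -/

import Mathlib

/-
Common setting for the formalisation of
"An analysis of equilibria in dense nematic liquid crystals" (J. M. Taylor).

* `V3` is ℝ³ (as a Euclidean space), `sph` is the unit sphere S²,
  and `μS` is the 2-dimensional Hausdorff (surface) measure restricted to S².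
* `IsProb f` says `f ∈ P(S²)`.
* `FE f η` is the free energy `F(f,η) ∈ ℝ ∪ {+∞}` (realised as `EReal`),
  with the conventions `0 ln 0 = 0`, `0 ⬝ (+∞) = 0` and `-ln x = +∞` for `x ≤ 0`:
  the value is the real integral whenever the argument of the logarithm is a.e.
  positive on `{f ≠ 0}` and the integrand is integrable, and `+∞` otherwise.
-/

open MeasureTheory Matrix Filter
open scoped ENNReal Topology Classical

noncomputable section

abbrev V3 : Type := EuclideanSpace ℝ (Fin 3)

/-- The unit sphere S² in ℝ³. -/
def sph : Set V3 := Metric.sphere (0 : V3) 1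

/-- The 2-dimensional Hausdorff (surface) measure on S². -/
def μS : Measure V3 := (μH[2]).restrict sph

abbrev Mat3 : Type := Matrix (Fin 3) (Fin 3) ℝ

/-- Membership in Sym₀(3): real symmetric traceless 3×3 matrices. -/
def Sym0 (Q : Mat3) : Prop := Q.IsSymm ∧ Q.trace = 0

/-- The Frobenius inner product `A·B = trace (A*B)` (on symmetric matrices). -/
def mdot (A B : Mat3) : ℝ := (A * B).trace

/-- The quadratic form `p ↦ Qp·p`. -/
def qf (Q : Mat3) (p : V3) : ℝ := ∑ i, ∑ j, Q i j * p i * p j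

/-- The smallest eigenvalue of a symmetric matrix, via Rayleigh quotients on S². -/
def vmin (Q : Mat3) : ℝ := ⨅ p : sph, qf Q (p : V3)

/-- `f ∈ P(S²)`. -/
def IsProb (f : V3 → ℝ) : Prop :=
  Integrable f μS ∧ (∀ᵐ p ∂μS, 0 ≤ f p) ∧ ∫ p, f p ∂μS = 1

/-- The interaction term `p ↦ ∫_{S²} ((p·q)² − 1/3) f(q) dq`. -/
def Kf (f : V3 → ℝ) (p : V3) : ℝ :=
  ∫ q, ((∑ i, p i * q i) ^ 2 - 1 / 3) * f q ∂μS

/-- The free energy `F(f,η) ∈ ℝ ∪ {+∞}`. -/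
def FE (f : V3 → ℝ) (η : ℝ) : EReal :=
  if (∀ᵐ p ∂μS, f p ≠ 0 → η < Kf f p) ∧
      Integrable (fun p => f p * Real.log (f p) - f p * Real.log (Kf f p - η)) μS
  then ((∫ p, f p * Real.log (f p) - f p * Real.log (Kf f p - η) ∂μS : ℝ) : EReal)
  else ⊤

/-- The Q-tensor `Q(f) = ∫_{S²} (p⊗p − (1/3)I) f(p) dp`. -/
def Qten (f : V3 → ℝ) : Mat3 :=
  Matrix.of fun i j => ∫ p, f p * (p i * p j - if i = j then (1 : ℝ) / 3 else 0) ∂μS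

/-- The macroscopic energy `J(Q,η) = inf_{f ∈ A(Q)} F(f,η)` (`= +∞` when `A(Q) = ∅`). -/
def Jfun (Q : Mat3) (η : ℝ) : EReal :=
  sInf {y : EReal | ∃ f : V3 → ℝ, IsProb f ∧ Qten f = Q ∧ FE f η = y}

/-- The dual objective `D(Q,λ,η) = λ·Q − ln ∫_{S²} exp(λp·p) max(Qp·p − η, 0) dp`. -/
def Dob (Q lam : Mat3) (η : ℝ) : ℝ :=
  mdot lam Q - Real.log (∫ p, Real.exp (qf lam p) * max (qf Q p - η) 0 ∂μS)

/-- The effective domain of `J(·,η)`. -/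
def domJ (η : ℝ) : Set Mat3 :=
  {Q : Mat3 | Sym0 Q ∧ -(1/3) < vmin Q ∧ η < mdot Q Q}

/-- The matrix `∫_{S²} (f(p)/(Qp·p − η)) (p⊗p − (1/3)I) dp` (integrand `0` where `f` vanishes,
by the junk-value conventions of division in Lean). -/
def Mmat (f : V3 → ℝ) (Q : Mat3) (η : ℝ) : Mat3 :=
  Matrix.of fun i j =>
    ∫ p, f p / (qf Q p - η) * (p i * p j - if i = j then (1 : ℝ) / 3 else 0) ∂μS

/-- The entropy `∫_{S²} f ln f ∈ ℝ ∪ {+∞}`. -/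
def EntE (f : V3 → ℝ) : EReal :=
  if Integrable (fun p => f p * Real.log (f p)) μS
  then ((∫ p, f p * Real.log (f p) ∂μS : ℝ) : EReal)
  else ⊤

/-- The Ball–Majumdar singular potential `ψ_s(Q) = inf_{f ∈ A(Q)} ∫ f ln f`. -/
def psiS (Q : Mat3) : EReal :=
  sInf {y : EReal | ∃ f : V3 → ℝ, IsProb f ∧ Qten f = Q ∧ EntE f = y}

/-- `f` is an `L^p`-local minimiser of `F(·,η)`. -/
def LpLocMin (pp : ℝ≥0∞) (η : ℝ) (f : V3 → ℝ) : Prop :=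
  FE f η < ⊤ ∧ ∃ ε : ℝ, 0 < ε ∧ ∀ g : V3 → ℝ, IsProb g →
    eLpNorm (g - f) pp μS < ENNReal.ofReal ε → FE f η ≤ FE g η


/-! ### Auxiliary machinery for `stmt_11` -/

section Stmt11Aux

/-- Zeros of a nontrivial function `α + β cos + γ sin` are countable. -/
lemma countable_trig (α β γ : ℝ) (h : ¬(α = 0 ∧ β = 0 ∧ γ = 0)) :
    {t : ℝ | α + β * Real.cos t + γ * Real.sin t = 0}.Countable := by
  by_cases hbg : β = 0 ∧ γ = 0
  · have hα : α ≠ 0 := fun h0 => h ⟨h0, hbg.1, hbg.2⟩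
    have : {t : ℝ | α + β * Real.cos t + γ * Real.sin t = 0} = ∅ := by
      ext t; simp [hbg.1, hbg.2, hα]
    rw [this]; exact Set.countable_empty
  · have hpos : 0 < β ^ 2 + γ ^ 2 := by
      rcases not_and_or.mp hbg with hb | hg
      · nlinarith [sq_nonneg γ, sq_abs β, abs_pos.mpr hb]
      · nlinarith [sq_nonneg β, sq_abs γ, abs_pos.mpr hg]
    set R : ℝ := Real.sqrt (β ^ 2 + γ ^ 2) with hRdef
    have hR : 0 < R := Real.sqrt_pos.mpr hpos
    set z : ℂ := β + γ * Complex.I with hz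
    have habs : ‖z‖ = R := by
      rw [hz, hRdef, Complex.norm_def, Complex.normSq_add_mul_I]
    have hzne : z ≠ 0 := by
      intro h0
      rw [h0] at habs; simp at habs; exact hR.ne habs
    set δ := z.arg with hδ
    have hcδ : Real.cos δ = β / R := by
      rw [hδ, Complex.cos_arg hzne, habs]; simp [hz]
    have hsδ : Real.sin δ = γ / R := by
      rw [hδ, Complex.sin_arg, habs]; simp [hz]
    have key : ∀ t, α + β * Real.cos t + γ * Real.sin t = α + R * Real.cos (t - δ) := by
      intro t
      rw [Real.cos_sub, hcδ, hsδ]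
      field_simp
      ring
    by_cases hle : |α / R| ≤ 1
    · set d := Real.arccos (-(α / R)) with hd
      have hcd : Real.cos d = -(α / R) := by
        rw [hd]; apply Real.cos_arccos
        · rw [abs_le] at hle; linarith [hle.2]
        · rw [abs_le] at hle; linarith [hle.1]
      apply Set.Countable.mono (s₁ := {t : ℝ | α + β * Real.cos t + γ * Real.sin t = 0})
        (s₂ := Set.range (fun kb : ℤ × Bool =>
          if kb.2 then d - 2 * kb.1 * Real.pi + δ else 2 * kb.1 * Real.pi - d + δ))
      · intro t ht
        simp only [Set.mem_setOf_eq] at ht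
        rw [key t] at ht
        have hcos : Real.cos (t - δ) = Real.cos d := by
          rw [hcd]
          field_simp at ht ⊢
          linarith
        rw [Real.cos_eq_cos_iff] at hcos
        obtain ⟨k, hk | hk⟩ := hcos
        · exact ⟨(k, true), by simp; linarith⟩
        · exact ⟨(k, false), by simp; linarith⟩
      · exact Set.countable_range _
    · have : {t : ℝ | α + β * Real.cos t + γ * Real.sin t = 0} = ∅ := by
        ext t
        simp only [Set.mem_setOf_eq, Set.mem_empty_iff_false, iff_false]
        intro ht
        rw [key t] at ht
        have h1 : Real.cos (t - δ) = -(α/R) := by field_simp at ht ⊢; linarith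
        have := Real.neg_one_le_cos (t - δ)
        have := Real.cos_le_one (t - δ)
        rw [abs_le] at hle
        push_neg at hle
        rcases lt_or_ge (α/R) (-1) with hh | hh
        · linarith [hle]
        · have := hle hh; linarith
      rw [this]; exact Set.countable_empty

lemma countable_trig2 (α β γ : ℝ) (h : ¬(α = 0 ∧ β = 0 ∧ γ = 0)) :
    {t : ℝ | α + β * Real.cos (2 * t) + γ * Real.sin (2 * t) = 0}.Countable := by
  have h2 : {t : ℝ | α + β * Real.cos (2 * t) + γ * Real.sin (2 * t) = 0}
      = (fun t : ℝ => 2 * t) ⁻¹' {t : ℝ | α + β * Real.cos t + γ * Real.sin t = 0} := rfl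
  rw [h2]
  exact (countable_trig α β γ h).preimage (mul_right_injective₀ two_ne_zero)

/-- The spherical-coordinates chart (longitude, colatitude) ↦ point of `S²`. -/
def φc (w : ℝ × ℝ) : V3 :=
  WithLp.toLp 2 ![Real.sin w.2 * Real.cos w.1, Real.sin w.2 * Real.sin w.1, Real.cos w.2]

def φpi (x : Fin 2 → ℝ) : V3 := φc (x 0, x 1)

def boxpi : Set (Fin 2 → ℝ) := Set.pi Set.univ (fun _ => Set.Icc (-7 : ℝ) 7)

lemma lipsin (a b : ℝ) : |Real.sin a - Real.sin b| ≤ |a - b| := by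
  have : LipschitzWith 1 Real.sin := by
    apply lipschitzWith_of_nnnorm_deriv_le Real.differentiable_sin
    intro x
    rw [Real.deriv_sin]
    simp [← NNReal.coe_le_coe, Real.abs_cos_le_one]
  simpa [Real.dist_eq] using this.dist_le_mul a b

lemma lipcos (a b : ℝ) : |Real.cos a - Real.cos b| ≤ |a - b| := by
  have : LipschitzWith 1 Real.cos := by
    apply lipschitzWith_of_nnnorm_deriv_le Real.differentiable_cos
    intro x
    rw [Real.deriv_cos]
    simp [← NNReal.coe_le_coe, abs_neg, Real.abs_sin_le_one]
  simpa [Real.dist_eq] using this.dist_le_mul a b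

lemma prod_trig_lip (s₁ s₂ : ℝ → ℝ) (hs₁ : ∀ a b, |s₁ a - s₁ b| ≤ |a - b|)
    (hs₂ : ∀ a b, |s₂ a - s₂ b| ≤ |a - b|) (hb₁ : ∀ a, |s₁ a| ≤ 1) (hb₂ : ∀ a, |s₂ a| ≤ 1)
    (a b a' b' : ℝ) : |s₁ a * s₂ b - s₁ a' * s₂ b'| ≤ |a - a'| + |b - b'| := by
  have h1 : s₁ a * s₂ b - s₁ a' * s₂ b' = (s₁ a - s₁ a') * s₂ b + s₁ a' * (s₂ b - s₂ b') := by
    ring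
  rw [h1]
  calc |(s₁ a - s₁ a') * s₂ b + s₁ a' * (s₂ b - s₂ b')|
      ≤ |(s₁ a - s₁ a') * s₂ b| + |s₁ a' * (s₂ b - s₂ b')| := abs_add_le _ _
    _ ≤ |a - a'| + |b - b'| := by
        rw [abs_mul, abs_mul]
        have := hs₁ a a'; have := hs₂ b b'; have := hb₂ b; have := hb₁ a'
        nlinarith [abs_nonneg (s₁ a - s₁ a'), abs_nonneg (s₂ b - s₂ b'),
          abs_nonneg (a - a'), abs_nonneg (b - b')]

lemma φpi_lip : LipschitzWith 4 φpi := by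
  apply LipschitzWith.of_dist_le_mul
  intro x y
  set dd := dist x y with hdd
  have hd0 : 0 ≤ dd := dist_nonneg
  have h0 : |x 0 - y 0| ≤ dd := by
    have := dist_le_pi_dist x y 0; rwa [Real.dist_eq] at this
  have h1 : |x 1 - y 1| ≤ dd := by
    have := dist_le_pi_dist x y 1; rwa [Real.dist_eq] at this
  have e0 : |Real.sin (x 1) * Real.cos (x 0) - Real.sin (y 1) * Real.cos (y 0)|
      ≤ 2 * dd := by
    have := prod_trig_lip Real.sin Real.cos lipsin lipcos
      (fun a => Real.abs_sin_le_one a) (fun a => Real.abs_cos_le_one a) (x 1) (x 0) (y 1) (y 0)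
    linarith
  have e1 : |Real.sin (x 1) * Real.sin (x 0) - Real.sin (y 1) * Real.sin (y 0)|
      ≤ 2 * dd := by
    have := prod_trig_lip Real.sin Real.sin lipsin lipsin
      (fun a => Real.abs_sin_le_one a) (fun a => Real.abs_sin_le_one a) (x 1) (x 0) (y 1) (y 0)
    linarith
  have e2 : |Real.cos (x 1) - Real.cos (y 1)| ≤ 2 * dd := by
    have := lipcos (x 1) (y 1); linarith
  rw [EuclideanSpace.dist_eq]
  have hsum : ∑ i, dist (φpi x i) (φpi y i) ^ 2 ≤ (4 * dd) ^ 2 := by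
    rw [Fin.sum_univ_three]
    simp only [φpi, φc, PiLp.toLp_apply, Real.dist_eq, Matrix.cons_val_zero, Matrix.cons_val_one,
      Matrix.head_cons, Matrix.cons_val_two, Matrix.tail_cons]
    nlinarith [abs_nonneg (Real.sin (x 1) * Real.cos (x 0) - Real.sin (y 1) * Real.cos (y 0)),
      abs_nonneg (Real.sin (x 1) * Real.sin (x 0) - Real.sin (y 1) * Real.sin (y 0)),
      abs_nonneg (Real.cos (x 1) - Real.cos (y 1)),
      sq_abs (Real.sin (x 1) * Real.cos (x 0) - Real.sin (y 1) * Real.cos (y 0)),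
      sq_abs (Real.sin (x 1) * Real.sin (x 0) - Real.sin (y 1) * Real.sin (y 0)),
      sq_abs (Real.cos (x 1) - Real.cos (y 1))]
  calc Real.sqrt (∑ i, dist (φpi x i) (φpi y i) ^ 2) ≤ Real.sqrt ((4 * dd) ^ 2) :=
        Real.sqrt_le_sqrt hsum
    _ = 4 * dd := by rw [Real.sqrt_sq (by linarith)]
    _ = (4 : NNReal) * dist x y := by norm_num [hdd]

lemma sph_norm {p : V3} (hp : p ∈ sph) : p 0 ^ 2 + p 1 ^ 2 + p 2 ^ 2 = 1 := by
  have h : ‖p‖ = 1 := by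
    simpa [sph, mem_sphere_iff_norm] using hp
  rw [EuclideanSpace.norm_eq] at h
  have := Real.sqrt_eq_one.mp (by simpa using h)
  simpa [Fin.sum_univ_three, Real.norm_eq_abs, sq_abs] using this

lemma sph_subset : sph ⊆ φpi '' boxpi := by
  intro p hp
  have hsum := sph_norm hp
  have hp2 : |p 2| ≤ 1 := by
    rw [abs_le]; constructor <;> nlinarith [sq_nonneg (p 0), sq_nonneg (p 1)]
  rw [abs_le] at hp2
  set θ := Real.arccos (p 2) with hθ
  have hcos : Real.cos θ = p 2 := Real.cos_arccos hp2.1 hp2.2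
  have hsin : Real.sin θ = Real.sqrt (1 - p 2 ^ 2) := Real.sin_arccos _
  have hθmem : θ ∈ Set.Icc (-7 : ℝ) 7 := by
    constructor
    · linarith [Real.arccos_nonneg (p 2)]
    · linarith [Real.arccos_le_pi (p 2), Real.pi_le_four]
  set z : ℂ := p 0 + p 1 * Complex.I with hz
  have habs : ‖z‖ = Real.sin θ := by
    rw [hz, Complex.norm_def, Complex.normSq_add_mul_I, hsin]
    congr 1; nlinarith
  by_cases hz0 : z = 0
  · have hp0 : p 0 = 0 := by
      have := congrArg Complex.re hz0; simpa [hz] using this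
    have hp1 : p 1 = 0 := by
      have := congrArg Complex.im hz0; simpa [hz] using this
    have hsin0 : Real.sin θ = 0 := by rw [← habs, hz0]; simp
    refine ⟨![0, θ], ?_, ?_⟩
    · intro i _
      fin_cases i
      · exact ⟨by norm_num, by norm_num⟩
      · simpa using hθmem
    · ext i
      fin_cases i <;>
        simp [φpi, φc, hsin0, hcos, hp0, hp1]
  · set ψ := z.arg with hψ
    have hψmem : ψ ∈ Set.Icc (-7 : ℝ) 7 := by
      constructor
      · linarith [Complex.neg_pi_lt_arg z, Real.pi_le_four]
      · linarith [Complex.arg_le_pi z, Real.pi_le_four]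
    refine ⟨![ψ, θ], ?_, ?_⟩
    · intro i _
      fin_cases i
      · simpa using hψmem
      · simpa using hθmem
    · ext i
      have hre : Real.sin θ * Real.cos ψ = p 0 := by
        rw [← habs, hψ, Complex.norm_mul_cos_arg]
        simp [hz]
      have him : Real.sin θ * Real.sin ψ = p 1 := by
        rw [← habs, hψ, Complex.norm_mul_sin_arg]
        simp [hz]
      fin_cases i <;> simp [φpi, φc, hre, him, hcos]

lemma boxpi_vol : (μH[2] : Measure (Fin 2 → ℝ)) boxpi = ENNReal.ofReal 14 ^ 2 := by
  have h := MeasureTheory.hausdorffMeasure_pi_real (ι := Fin 2)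
  simp only [Fintype.card_fin, Nat.cast_ofNat] at h
  rw [h, boxpi, volume_pi_pi]
  simp [Real.volume_Icc]
  norm_num

lemma sph_fin : (μH[2] : Measure V3) sph ≠ ∞ := by
  have h2 := LipschitzWith.hausdorffMeasure_image_le φpi_lip (by norm_num : (0:ℝ) ≤ 2) boxpi
  rw [boxpi_vol] at h2
  refine ne_top_of_le_ne_top ?_ ((measure_mono sph_subset).trans h2)
  exact ENNReal.mul_ne_top (ENNReal.rpow_ne_top_of_nonneg (by norm_num) (by simp))
    (ENNReal.pow_ne_top ENNReal.ofReal_ne_top)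

section FixM
variable (M : Mat3)

def Af (ψ : ℝ) : ℝ :=
  (M 0 0 + M 1 1) / 2 + ((M 0 0 - M 1 1) / 2) * Real.cos (2 * ψ) + M 0 1 * Real.sin (2 * ψ)

def Bf (ψ : ℝ) : ℝ := 0 + (2 * M 0 2) * Real.cos ψ + (2 * M 1 2) * Real.sin ψ

def Ff (w : ℝ × ℝ) : ℝ :=
  (Af M w.1 + M 2 2) / 2 + ((M 2 2 - Af M w.1) / 2) * Real.cos (2 * w.2)
    + (Bf M w.1 / 2) * Real.sin (2 * w.2)

lemma qf_phi_eq (hsym : ∀ i j, M i j = M j i) (w : ℝ × ℝ) : qf M (φc w) = Ff M w := by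
  obtain ⟨ψ, θ⟩ := w
  have h10 : M 1 0 = M 0 1 := hsym 1 0
  have h20 : M 2 0 = M 0 2 := hsym 2 0
  have h21 : M 2 1 = M 1 2 := hsym 2 1
  simp only [qf, Ff, Af, Bf, Fin.sum_univ_three, φc, PiLp.toLp_apply, Matrix.cons_val_zero,
    Matrix.cons_val_one, Matrix.head_cons, Matrix.cons_val_two, Matrix.tail_cons,
    Real.cos_two_mul, Real.sin_two_mul, h10, h20, h21]
  have hψ := Real.sin_sq_add_cos_sq ψ
  have hθ := Real.sin_sq_add_cos_sq θ
  linear_combination (M 1 1 + (M 0 0 - M 1 1) * Real.cos ψ ^ 2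
      + 2 * M 0 1 * Real.sin ψ * Real.cos ψ) * hθ
    + M 1 1 * Real.sin θ ^ 2 * hψ

lemma bad_countable (hsym : ∀ i j, M i j = M j i) (hM : M ≠ 0) :
    {ψ : ℝ | Af M ψ = 0 ∧ Bf M ψ = 0 ∧ M 2 2 = 0}.Countable := by
  by_cases hc : M 2 2 = 0
  · by_cases h1 : (M 0 0 + M 1 1) / 2 = 0 ∧ (M 0 0 - M 1 1) / 2 = 0 ∧ M 0 1 = 0
    · -- then M 0 0 = M 1 1 = M 0 1 = 0; so some of M 0 2, M 1 2 nonzero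
      have ha : M 0 0 = 0 := by have := h1.1; have := h1.2.1; linarith
      have hb : M 1 1 = 0 := by have := h1.1; have := h1.2.1; linarith
      have hd : M 0 1 = 0 := h1.2.2
      have hef : ¬((0:ℝ) = 0 ∧ 2 * M 0 2 = 0 ∧ 2 * M 1 2 = 0) := by
        rintro ⟨-, he, hf⟩
        apply hM
        have he' : M 0 2 = 0 := by linarith
        have hf' : M 1 2 = 0 := by linarith
        ext i j
        fin_cases i <;> fin_cases j <;>
          simp_all [hsym 1 0, hsym 2 0, hsym 2 1]
      have : {ψ : ℝ | Af M ψ = 0 ∧ Bf M ψ = 0 ∧ M 2 2 = 0} ⊆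
          {ψ : ℝ | 0 + (2 * M 0 2) * Real.cos ψ + (2 * M 1 2) * Real.sin ψ = 0} := by
        intro ψ hψ; exact hψ.2.1
      exact (countable_trig 0 (2 * M 0 2) (2 * M 1 2) hef).mono this
    · have : {ψ : ℝ | Af M ψ = 0 ∧ Bf M ψ = 0 ∧ M 2 2 = 0} ⊆
          {ψ : ℝ | (M 0 0 + M 1 1) / 2 + ((M 0 0 - M 1 1) / 2) * Real.cos (2 * ψ)
            + M 0 1 * Real.sin (2 * ψ) = 0} := by
        intro ψ hψ; exact hψ.1
      exact (countable_trig2 _ _ _ h1).mono this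
  · have : {ψ : ℝ | Af M ψ = 0 ∧ Bf M ψ = 0 ∧ M 2 2 = 0} = ∅ := by
      ext ψ; simp [hc]
    rw [this]; exact Set.countable_empty

lemma slice_countable (ψ : ℝ) (hψ : ¬(Af M ψ = 0 ∧ Bf M ψ = 0 ∧ M 2 2 = 0)) :
    {θ : ℝ | Ff M (ψ, θ) = 0}.Countable := by
  have hne : ¬((Af M ψ + M 2 2) / 2 = 0 ∧ (M 2 2 - Af M ψ) / 2 = 0 ∧ Bf M ψ / 2 = 0) := by
    rintro ⟨e1, e2, e3⟩
    exact hψ ⟨by linarith, by linarith, by linarith⟩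
  exact countable_trig2 _ _ _ hne

lemma Ff_null (hsym : ∀ i j, M i j = M j i) (hM : M ≠ 0) :
    (volume : Measure (ℝ × ℝ)) {w : ℝ × ℝ | Ff M w = 0} = 0 := by
  have hcont : Continuous (Ff M) := by
    unfold Ff Af Bf
    fun_prop
  have hmeas : MeasurableSet {w : ℝ × ℝ | Ff M w = 0} :=
    hcont.measurable (measurableSet_singleton (0 : ℝ))
  rw [MeasureTheory.Measure.volume_eq_prod, MeasureTheory.Measure.measure_prod_null hmeas]
  have hbad : (volume : Measure ℝ)
      {ψ : ℝ | Af M ψ = 0 ∧ Bf M ψ = 0 ∧ M 2 2 = 0} = 0 :=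
    (bad_countable M hsym hM).measure_zero _
  have hae : ∀ᵐ ψ : ℝ, ¬(Af M ψ = 0 ∧ Bf M ψ = 0 ∧ M 2 2 = 0) := by
    rw [MeasureTheory.ae_iff]
    simpa using hbad
  filter_upwards [hae] with ψ hψ
  have : (Prod.mk ψ ⁻¹' {w : ℝ × ℝ | Ff M w = 0}) = {θ : ℝ | Ff M (ψ, θ) = 0} := rfl
  rw [this]
  exact ((slice_countable M ψ hψ).measure_zero _)

/-- The zero set on the sphere of a nonzero symmetric quadratic form is `H²`-null. -/
lemma qf_zero_null (hsym : ∀ i j, M i j = M j i) (hM : M ≠ 0) :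
    (μH[2] : Measure V3) (sph ∩ {p : V3 | qf M p = 0}) = 0 := by
  have hsub : sph ∩ {p : V3 | qf M p = 0} ⊆
      φpi '' (boxpi ∩ (fun x => Ff M (x 0, x 1)) ⁻¹' {0}) := by
    rintro p ⟨hp1, hp2⟩
    obtain ⟨x, hx, hxp⟩ := sph_subset hp1
    refine ⟨x, ⟨hx, ?_⟩, hxp⟩
    have : qf M (φc (x 0, x 1)) = 0 := by rw [show φc (x 0, x 1) = φpi x from rfl, hxp]; exact hp2
    rw [qf_phi_eq M hsym] at this
    simpa using this
  have h1 : (μH[2] : Measure V3) (sph ∩ {p : V3 | qf M p = 0}) ≤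
      μH[2] (φpi '' (boxpi ∩ (fun x => Ff M (x 0, x 1)) ⁻¹' {0})) := measure_mono hsub
  have h2 := LipschitzWith.hausdorffMeasure_image_le φpi_lip (by norm_num : (0:ℝ) ≤ 2)
    (boxpi ∩ (fun x => Ff M (x 0, x 1)) ⁻¹' {0})
  have h3 : (μH[2] : Measure (Fin 2 → ℝ)) (boxpi ∩ (fun x => Ff M (x 0, x 1)) ⁻¹' {0}) = 0 := by
    have hpi := MeasureTheory.hausdorffMeasure_pi_real (ι := Fin 2)
    simp only [Fintype.card_fin, Nat.cast_ofNat] at hpi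
    rw [hpi]
    have hle : (volume : Measure (Fin 2 → ℝ)) (boxpi ∩ (fun x => Ff M (x 0, x 1)) ⁻¹' {0})
        ≤ volume ((fun x : Fin 2 → ℝ => Ff M (x 0, x 1)) ⁻¹' {0}) :=
      measure_mono Set.inter_subset_right
    have hpre : (fun x : Fin 2 → ℝ => Ff M (x 0, x 1)) ⁻¹' {0}
        = (MeasurableEquiv.piFinTwo fun _ => ℝ) ⁻¹' {w : ℝ × ℝ | Ff M w = 0} := rfl
    have hcont : Continuous (Ff M) := by unfold Ff Af Bf; fun_prop
    have hmeas : MeasurableSet {w : ℝ × ℝ | Ff M w = 0} :=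
      hcont.measurable (measurableSet_singleton (0 : ℝ))
    have hzero : (volume : Measure (Fin 2 → ℝ))
        ((MeasurableEquiv.piFinTwo fun _ => ℝ) ⁻¹' {w : ℝ × ℝ | Ff M w = 0}) = 0 := by
      rw [(MeasureTheory.volume_preserving_piFinTwo fun _ => ℝ).measure_preimage
        hmeas.nullMeasurableSet]
      exact Ff_null M hsym hM
    rw [hpre] at hle
    rw [hzero] at hle
    exact le_antisymm hle zero_le
  rw [h3, mul_zero] at h2
  exact le_antisymm (h1.trans h2) zero_le

end FixM

end Stmt11Aux


lemma qf_cont (Q : Mat3) : Continuous fun p : V3 => qf Q p := by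
  unfold qf; fun_prop

lemma qf_sub_eta (Q : Mat3) (η : ℝ) {p : V3} (hp : p ∈ sph) :
    qf (Q - η • (1 : Mat3)) p = qf Q p - η := by
  have hs := sph_norm hp
  simp only [qf, Fin.sum_univ_three, Matrix.sub_apply, Matrix.smul_apply, Matrix.one_apply,
    smul_eq_mul]
  simp only [Fin.reduceEq, reduceIte, mul_one, mul_zero, zero_mul, sub_zero, mul_ite]
  ring_nf
  linear_combination (-η) * hs

lemma abs_coord_le {p : V3} (hp : p ∈ sph) (i : Fin 3) : |p i| ≤ 1 := by
  have hs := sph_norm hp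
  have hsum : ∑ j, p j ^ 2 = 1 := by rw [Fin.sum_univ_three]; exact hs
  have h2 : p i ^ 2 ≤ 1 := by
    rw [← hsum]
    exact Finset.single_le_sum (fun j _ => sq_nonneg (p j)) (Finset.mem_univ i)
  exact abs_le_one_iff_mul_self_le_one.mpr (by nlinarith)

lemma qf_diff_bound (D : Mat3) {p : V3} (hp : p ∈ sph) :
    |qf D p| ≤ ∑ i, ∑ j, |D i j| := by
  have hi := abs_coord_le hp
  calc |qf D p| ≤ ∑ i, |∑ j, D i j * p i * p j| := Finset.abs_sum_le_sum_abs _ _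
    _ ≤ ∑ i, ∑ j, |D i j * p i * p j| :=
        Finset.sum_le_sum fun i _ => Finset.abs_sum_le_sum_abs _ _
    _ ≤ ∑ i, ∑ j, |D i j| := by
        apply Finset.sum_le_sum; intro i _; apply Finset.sum_le_sum; intro j _
        rw [abs_mul, abs_mul]
        calc |D i j| * |p i| * |p j| ≤ |D i j| * |p i| :=
              mul_le_of_le_one_right (by positivity) (hi j)
          _ ≤ |D i j| := mul_le_of_le_one_right (abs_nonneg _) (hi i)

lemma key_point (Q : Mat3) (η : ℝ) (hQsym : Q.IsSymm) (htr : Q.trace = 0)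
    (hlt : η < mdot Q Q) (ε : ℝ) (hε : 0 < ε) :
    ∃ tz : ℝ, 0 < tz ∧
      (μH[2] : Measure V3) (sph ∩ {p : V3 | |qf Q p - η| < 2 * tz}) < ENNReal.ofReal ε := by
  set M : Mat3 := Q - η • (1 : Mat3) with hMdef
  have hQ : ∀ i j, Q i j = Q j i := fun i j => (hQsym.apply i j).symm
  have hsym : ∀ i j, M i j = M j i := by
    intro i j
    simp only [hMdef, Matrix.sub_apply, Matrix.smul_apply, Matrix.one_apply, smul_eq_mul]
    rw [hQ i j]
    by_cases hij : i = j
    · simp [hij]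
    · simp [hij, Ne.symm hij]
  have hMne : M ≠ 0 := by
    intro h0
    have hQη : Q = η • (1 : Mat3) := by rwa [sub_eq_zero] at h0
    have h00 : Q 0 0 = η := by rw [hQη]; simp [Matrix.smul_apply, Matrix.one_apply]
    have h11 : Q 1 1 = η := by rw [hQη]; simp [Matrix.smul_apply, Matrix.one_apply]
    have h22 : Q 2 2 = η := by rw [hQη]; simp [Matrix.smul_apply, Matrix.one_apply]
    have hη : η = 0 := by
      rw [Matrix.trace_fin_three, h00, h11, h22] at htr; linarith
    have hQ0 : Q = 0 := by rw [hQη, hη, zero_smul]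
    rw [hQ0] at hlt
    have : mdot (0 : Mat3) (0 : Mat3) = 0 := by simp [mdot]
    rw [this] at hlt
    exact absurd hlt (by rw [hη]; exact lt_irrefl 0)
  set s : ℕ → Set V3 := fun n => sph ∩ {p : V3 | |qf Q p - η| < 1 / (n + 1)} with hsdef
  have hcontabs : Continuous fun p : V3 => |qf Q p - η| :=
    ((qf_cont Q).sub continuous_const).abs
  have hsphm : MeasurableSet sph := Metric.isClosed_sphere.measurableSet
  have hmeas : ∀ n, NullMeasurableSet (s n) (μH[2] : Measure V3) := fun n =>
    (hsphm.inter (isOpen_lt hcontabs continuous_const).measurableSet).nullMeasurableSet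
  have hanti : Antitone s := by
    intro n m hnm p hp
    refine ⟨hp.1, ?_⟩
    have hp2 : |qf Q p - η| < 1 / ((m : ℝ) + 1) := hp.2
    show |qf Q p - η| < 1 / ((n : ℝ) + 1)
    refine lt_of_lt_of_le hp2 ?_
    apply one_div_le_one_div_of_le
    · positivity
    · have : (n : ℝ) ≤ m := Nat.cast_le.mpr hnm
      linarith
  have hfin : ∃ n, (μH[2] : Measure V3) (s n) ≠ ∞ :=
    ⟨0, ne_top_of_le_ne_top sph_fin (measure_mono Set.inter_subset_left)⟩
  have hiInter : ⋂ n, s n = sph ∩ {p : V3 | qf M p = 0} := by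
    ext p
    simp only [Set.mem_iInter, Set.mem_inter_iff, Set.mem_setOf_eq, hsdef]
    constructor
    · intro h
      have hp := (h 0).1
      refine ⟨hp, ?_⟩
      rw [hMdef, qf_sub_eta Q η hp]
      by_contra hne
      have habs : 0 < |qf Q p - η| := abs_pos.mpr hne
      obtain ⟨n, hn⟩ := exists_nat_one_div_lt habs
      exact absurd ((h n).2) (not_lt.mpr hn.le)
    · rintro ⟨hp, h0⟩ n
      rw [hMdef, qf_sub_eta Q η hp] at h0
      refine ⟨hp, ?_⟩
      rw [h0, abs_zero]
      positivity
  have hlim := tendsto_measure_iInter_atTop hmeas hanti hfin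
  rw [hiInter, qf_zero_null M hsym hMne] at hlim
  have hev := hlim.eventually_lt_const
    (show (0 : ℝ≥0∞) < ENNReal.ofReal ε from ENNReal.ofReal_pos.mpr hε)
  obtain ⟨n, hn⟩ := hev.exists
  refine ⟨1 / (2 * ((n : ℝ) + 1)), by positivity, ?_⟩
  have h2t : 2 * (1 / (2 * ((n : ℝ) + 1))) = 1 / ((n : ℝ) + 1) := by
    field_simp
  rw [h2t]
  exact hn

/-- for compact `K ⊆ {(Q,η) : Q ∈ Sym₀(3), v_min(Q) > −1/3, |Q|² > η}`,
`limsup_{t→0⁺} sup_{(Q,η)∈K} H²({p ∈ S² : |Qp·p − η| < t}) = 0`. -/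
theorem stmt_11 (K : Set (Mat3 × ℝ)) (hK : IsCompact K)
    (hsub : K ⊆ {Qη : Mat3 × ℝ |
      Sym0 Qη.1 ∧ -(1/3) < vmin Qη.1 ∧ Qη.2 < mdot Qη.1 Qη.1}) :
    ∀ ε : ℝ, 0 < ε → ∃ t₀ : ℝ, 0 < t₀ ∧ ∀ t : ℝ, 0 < t → t < t₀ →
      ∀ Q : Mat3, ∀ η : ℝ, (Q, η) ∈ K →
        μS {p : V3 | |qf Q p - η| < t} < ENNReal.ofReal ε := by
  intro ε hε
  have key : ∀ z ∈ K, ∃ tz : ℝ, 0 < tz ∧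
      (μH[2] : Measure V3) (sph ∩ {p : V3 | |qf z.1 p - z.2| < 2 * tz}) < ENNReal.ofReal ε := by
    intro z hz
    obtain ⟨⟨hsym, htr⟩, -, hlt⟩ := hsub hz
    exact key_point z.1 z.2 hsym htr hlt ε hε
  choose! tf htpos htsmall using key
  set U : K → Set (Mat3 × ℝ) := fun z =>
    {w : Mat3 × ℝ | (∑ i, ∑ j, |w.1 i j - (z : Mat3 × ℝ).1 i j|)
      + |w.2 - (z : Mat3 × ℝ).2| < tf z} with hUdef
  have hUopen : ∀ z : K, IsOpen (U z) := by
    intro z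
    apply isOpen_lt _ continuous_const
    apply Continuous.add
    · apply continuous_finset_sum; intro i _
      apply continuous_finset_sum; intro j _
      exact (((continuous_fst).matrix_elem i j).sub continuous_const).abs
    · exact ((continuous_snd).sub continuous_const).abs
  have hcover : K ⊆ ⋃ z : K, U z := by
    intro w hw
    refine Set.mem_iUnion.mpr ⟨⟨w, hw⟩, ?_⟩
    have : (∑ i : Fin 3, ∑ j : Fin 3, |w.1 i j - w.1 i j|) + |w.2 - w.2| = 0 := by simp
    simp only [hUdef, Set.mem_setOf_eq]
    rw [this]
    exact htpos w hw
  obtain ⟨T, hT⟩ := hK.elim_finite_subcover U hUopen hcover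
  by_cases hTne : T.Nonempty
  · refine ⟨T.inf' hTne (fun z => tf z), ?_, ?_⟩
    · rw [Finset.lt_inf'_iff]
      intro z _
      exact htpos z z.2
    · intro t ht htlt Q η hQη
      have hmem := hT hQη
      rw [Set.mem_iUnion₂] at hmem
      obtain ⟨z, hzT, hzU⟩ := hmem
      have htz : t < tf z := lt_of_lt_of_le htlt (Finset.inf'_le _ hzT)
      have hsubset : {p : V3 | |qf Q p - η| < t} ∩ sph ⊆
          sph ∩ {p : V3 | |qf (z : Mat3 × ℝ).1 p - (z : Mat3 × ℝ).2| < 2 * tf z} := by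
        rintro p ⟨hpt, hps⟩
        refine ⟨hps, ?_⟩
        have hd : |qf ((z : Mat3 × ℝ).1 - Q) p| ≤
            ∑ i, ∑ j, |((z : Mat3 × ℝ).1 - Q) i j| := qf_diff_bound _ hps
        have hqd : qf ((z : Mat3 × ℝ).1 - Q) p = qf (z : Mat3 × ℝ).1 p - qf Q p := by
          simp only [qf, Fin.sum_univ_three, Matrix.sub_apply]
          ring
        have hsums : (∑ i, ∑ j, |((z : Mat3 × ℝ).1 - Q) i j|)
            = ∑ i, ∑ j, |Q i j - (z : Mat3 × ℝ).1 i j| := by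
          apply Finset.sum_congr rfl; intro i _
          apply Finset.sum_congr rfl; intro j _
          rw [Matrix.sub_apply, abs_sub_comm]
        have hzU' : (∑ i, ∑ j, |Q i j - (z : Mat3 × ℝ).1 i j|)
            + |η - (z : Mat3 × ℝ).2| < tf z := hzU
        have hpt' : |qf Q p - η| < t := hpt
        have htri : |qf (z : Mat3 × ℝ).1 p - (z : Mat3 × ℝ).2| ≤
            |qf Q p - η| + |qf ((z : Mat3 × ℝ).1 - Q) p| + |η - (z : Mat3 × ℝ).2| := by
          have : qf (z : Mat3 × ℝ).1 p - (z : Mat3 × ℝ).2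
              = (qf Q p - η) + (qf ((z : Mat3 × ℝ).1 - Q) p) + (η - (z : Mat3 × ℝ).2) := by
            rw [hqd]; ring
          have t1 := abs_add_le ((qf Q p - η) + qf ((z : Mat3 × ℝ).1 - Q) p)
            (η - (z : Mat3 × ℝ).2)
          have t2 := abs_add_le (qf Q p - η) (qf ((z : Mat3 × ℝ).1 - Q) p)
          rw [this]
          linarith
        rw [hsums] at hd
        simp only [Set.mem_setOf_eq]
        have h0 : 0 ≤ ∑ i, ∑ j, |Q i j - (z : Mat3 × ℝ).1 i j| := by positivity
        linarith
      have hms : MeasurableSet {p : V3 | |qf Q p - η| < t} :=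
        (isOpen_lt ((qf_cont Q).sub continuous_const).abs continuous_const).measurableSet
      rw [μS, Measure.restrict_apply hms]
      calc (μH[2] : Measure V3) ({p : V3 | |qf Q p - η| < t} ∩ sph)
          ≤ μH[2] (sph ∩ {p : V3 | |qf (z : Mat3 × ℝ).1 p - (z : Mat3 × ℝ).2| < 2 * tf z}) :=
            measure_mono hsubset
        _ < ENNReal.ofReal ε := htsmall z z.2
  · refine ⟨1, one_pos, ?_⟩
    intro t ht htlt Q η hQη
    exfalso
    have := hT hQη
    rw [Finset.not_nonempty_iff_eq_empty.mp hTne] at this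
    simp at this
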